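/- For every parameter p with 2/3 < p < 0.70237758, writing p₁ = α_p(p) and p₂ = α_p(p₁), one has (2p-1)/p₁ < 1 and 4(2p-1)² < p₂ (equivalently, 2(2p-1)/√(p₂) < 1). -/

import Mathlib

noncomputable section

/-- The folded belief dynamics `α_p : [1/2, 1] → ℝ`:
`α_p(t) = 2 - 3p + γ/t` if `t < 2/3` and `α_p(t) = 3p - 1 - γ/t` if `t ≥ 2/3`,
where `γ = 2p - 1`. -/
def alphaMap (p t : ℝ) : ℝ :=
  if t < 2/3 then 2 - 3*p + (2*p - 1)/t else 3*p - 1 - (2*p - 1)/t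

/-- For `2/3 < p < 0.70237758`, with `p₁ = α_p(p)` and `p₂ = α_p(p₁)`, one has
`γ/p₁ < 1` and `4γ² < p₂` (equivalently `2γ/√p₂ < 1`), where `γ = 2p-1`. -/
theorem spectral_radius_bounds_three_intervals (p : ℝ)
    (hp : 2/3 < p) (hp1 : p < 0.70237758) :
    (2*p - 1) / alphaMap p p < 1 ∧
    4*(2*p - 1)^2 < alphaMap p (alphaMap p p) := by
  have hp0 : (0:ℝ) < p := by linarith
  have hD : (0:ℝ) < 3*p^2 - 3*p + 1 := by nlinarith [sq_nonneg (p - 1/2)]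
  have h1 : alphaMap p p = (3*p^2 - 3*p + 1)/p := by
    unfold alphaMap
    rw [if_neg (by linarith)]
    field_simp; ring
  have hqpos : 0 < (3*p^2 - 3*p + 1)/p := div_pos hD hp0
  have hqlt : (3*p^2 - 3*p + 1)/p < 2/3 := by
    rw [div_lt_iff₀ hp0]; nlinarith
  have h2 : alphaMap p ((3*p^2 - 3*p + 1)/p) = 2 - 3*p + (2*p-1)/((3*p^2 - 3*p + 1)/p) := by
    unfold alphaMap; rw [if_pos hqlt]
  have hdiv : (2*p-1)/((3*p^2 - 3*p + 1)/p) = p*(2*p-1)/(3*p^2-3*p+1) := by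
    field_simp
  constructor
  · rw [h1, div_lt_one hqpos, lt_div_iff₀ hp0]
    nlinarith [sq_nonneg (p-1)]
  · rw [h1, h2, hdiv]
    have key : (4*(2*p-1)^2 - (2 - 3*p)) * (3*p^2-3*p+1) < p*(2*p-1) := by
      nlinarith [mul_pos (sub_pos.2 hp) (sub_pos.2 hp1), sq_nonneg (p - 2/3),
        sq_nonneg (0.70237758 - p), mul_pos (mul_pos (sub_pos.2 hp) (sub_pos.2 hp1)) hp0,
        sq_nonneg ((p - 2/3)*(0.70237758 - p))]
    have := (lt_div_iff₀ hD).2 key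
    linarith
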